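/- Let E' be a nonempty finite set with |E'| ∈ [2^{j−1}, 2^j), and let φ be a pairwise independent hash function mapping each element to a uniform value in [0, 2^ω). Let E'' = {e ∈ E' : φ(e) < 2^{ω−(j+1)}}. Then Pr[|E''| = 1] ≥ 1/8. -/

import Mathlib

/-- Isolation via pairwise independent hashing: if `2^{j−1} ≤ |E'| < 2^j` and `φ` maps
each element to a pairwise-independent uniform value in `[0, 2^ω)`, then with probability
at least `1/8` exactly one element `e ∈ E'` satisfies `φ e < 2^{ω−(j+1)}`. -/
theorem stmt9 {E : Type*} [Fintype E] [DecidableEq E]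
    (ω j : ℕ) (hj : 1 ≤ j) (hω : j + 1 ≤ ω)
    (Φ : Finset (E → ℕ)) (hΦ : Φ.Nonempty)
    (E' : Finset E) (hlo : 2 ^ (j - 1) ≤ E'.card) (hhi : E'.card < 2 ^ j)
    (hrange : ∀ φ ∈ Φ, ∀ e : E, φ e < 2 ^ ω)
    (hsingle : ∀ e : E, ∀ v < 2 ^ ω,
      ((Φ.filter (fun φ => φ e = v)).card : ℝ) = (Φ.card : ℝ) / 2 ^ ω)
    (hpair : ∀ e e' : E, e ≠ e' → ∀ v < 2 ^ ω, ∀ w < 2 ^ ω,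
      ((Φ.filter (fun φ => φ e = v ∧ φ e' = w)).card : ℝ)
        = (Φ.card : ℝ) / (2 ^ ω) ^ 2) :
    (Φ.card : ℝ) / 8
      ≤ ((Φ.filter
          (fun φ => (E'.filter (fun e => φ e < 2 ^ (ω - (j + 1)))).card = 1)).card : ℝ) := by
  classical
  set T : ℕ := 2 ^ (ω - (j + 1)) with hT
  have hTP : T * 2 ^ (j + 1) = 2 ^ ω := by
    rw [hT, ← pow_add, Nat.sub_add_cancel hω]
  have hTle : T ≤ 2 ^ ω := by
    calc T ≤ T * 2 ^ (j + 1) := Nat.le_mul_of_pos_right _ (Nat.pow_pos (by norm_num))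
    _ = 2 ^ ω := hTP
  set p : ℝ := (T : ℝ) / 2 ^ ω with hp
  have hPpos : (0:ℝ) < 2 ^ ω := by positivity
  have hp0 : 0 ≤ p := by positivity
  have hpEq : p * 2 ^ (j + 1) = 1 := by
    rw [hp, div_mul_eq_mul_div]
    rw [div_eq_one_iff_eq (ne_of_gt hPpos)]
    exact_mod_cast hTP
  set N : ℝ := (Φ.card : ℝ) with hN
  have hN0 : 0 ≤ N := by positivity
  set n : ℝ := (E'.card : ℝ) with hn
  have hn0 : 0 ≤ n := by positivity
  -- single event probability
  have key1 : ∀ e : E, ((Φ.filter (fun φ => φ e < T)).card : ℝ) = N * p := by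
    intro e
    have hsplit : Φ.filter (fun φ => φ e < T)
        = (Finset.range T).biUnion (fun v => Φ.filter (fun φ => φ e = v)) := by
      ext φ
      simp only [Finset.mem_filter, Finset.mem_biUnion, Finset.mem_range]
      constructor
      · rintro ⟨h1, h2⟩; exact ⟨φ e, h2, h1, rfl⟩
      · rintro ⟨v, hv, h1, h2⟩; exact ⟨h1, h2 ▸ hv⟩
    have hdisj : ∀ a ∈ Finset.range T, ∀ b ∈ Finset.range T, a ≠ b →
        Disjoint (Φ.filter (fun φ => φ e = a)) (Φ.filter (fun φ => φ e = b)) := by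
      intro a _ b _ hab
      refine Finset.disjoint_left.mpr ?_
      intro φ h1 h2
      simp only [Finset.mem_filter] at h1 h2
      exact hab (h1.2 ▸ h2.2)
    rw [hsplit, Finset.card_biUnion hdisj]
    push_cast
    rw [Finset.sum_congr rfl (fun v hv => hsingle e v (lt_of_lt_of_le (Finset.mem_range.mp hv) hTle))]
    rw [Finset.sum_const, Finset.card_range, nsmul_eq_mul, hp, hN]
    ring
  -- pair event probability
  have key2 : ∀ e e' : E, e ≠ e' →
      ((Φ.filter (fun φ => φ e < T ∧ φ e' < T)).card : ℝ) = N * p ^ 2 := by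
    intro e e' hee
    have hsplit : Φ.filter (fun φ => φ e < T ∧ φ e' < T)
        = ((Finset.range T) ×ˢ (Finset.range T)).biUnion
            (fun v => Φ.filter (fun φ => φ e = v.1 ∧ φ e' = v.2)) := by
      ext φ
      simp only [Finset.mem_filter, Finset.mem_biUnion, Finset.mem_product, Finset.mem_range]
      constructor
      · rintro ⟨h1, h2, h3⟩; exact ⟨(φ e, φ e'), ⟨h2, h3⟩, h1, rfl, rfl⟩
      · rintro ⟨v, ⟨hv1, hv2⟩, h1, h2, h3⟩; exact ⟨h1, h2 ▸ hv1, h3 ▸ hv2⟩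
    have hdisj : ∀ a ∈ (Finset.range T) ×ˢ (Finset.range T),
        ∀ b ∈ (Finset.range T) ×ˢ (Finset.range T), a ≠ b →
        Disjoint (Φ.filter (fun φ => φ e = a.1 ∧ φ e' = a.2))
          (Φ.filter (fun φ => φ e = b.1 ∧ φ e' = b.2)) := by
      intro a _ b _ hab
      refine Finset.disjoint_left.mpr ?_
      intro φ h1 h2
      simp only [Finset.mem_filter] at h1 h2
      exact hab (Prod.ext (h1.2.1 ▸ h2.2.1) (h1.2.2 ▸ h2.2.2))
    rw [hsplit, Finset.card_biUnion hdisj]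
    push_cast
    calc ∑ v ∈ Finset.range T ×ˢ Finset.range T,
          ((Φ.filter (fun φ => φ e = v.1 ∧ φ e' = v.2)).card : ℝ)
        = ∑ _v ∈ Finset.range T ×ˢ Finset.range T, N / (2 ^ ω) ^ 2 :=
          Finset.sum_congr rfl (fun v hv => by
            rw [Finset.mem_product, Finset.mem_range, Finset.mem_range] at hv
            exact hpair e e' hee v.1 (lt_of_lt_of_le hv.1 hTle) v.2 (lt_of_lt_of_le hv.2 hTle))
    _ = N * p ^ 2 := by
          rw [Finset.sum_const, Finset.card_product, Finset.card_range, nsmul_eq_mul, hp]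
          push_cast
          ring
  set S : (E → ℕ) → Finset E := fun φ => E'.filter (fun e => φ e < T) with hS
  -- first moment
  have sum1 : ∑ φ ∈ Φ, ((S φ).card : ℝ) = n * (N * p) := by
    have h1 : ∑ φ ∈ Φ, (S φ).card = ∑ e ∈ E', (Φ.filter (fun φ => φ e < T)).card := by
      simp only [hS, Finset.card_filter]
      exact Finset.sum_comm
    calc ∑ φ ∈ Φ, ((S φ).card : ℝ) = ((∑ φ ∈ Φ, (S φ).card : ℕ) : ℝ) := by push_cast; rfl
    _ = ((∑ e ∈ E', (Φ.filter (fun φ => φ e < T)).card : ℕ) : ℝ) := by rw [h1]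
    _ = ∑ e ∈ E', ((Φ.filter (fun φ => φ e < T)).card : ℝ) := by push_cast; rfl
    _ = ∑ e ∈ E', (N * p) := Finset.sum_congr rfl (fun e _ => key1 e)
    _ = n * (N * p) := by rw [Finset.sum_const, nsmul_eq_mul, hn]
  -- second moment (off-diagonal)
  have sum2 : ∑ φ ∈ Φ, ((S φ).offDiag.card : ℝ) = (n * n - n) * (N * p ^ 2) := by
    have hoff : ∀ φ, (S φ).offDiag
        = E'.offDiag.filter (fun q => φ q.1 < T ∧ φ q.2 < T) := by
      intro φ
      ext q
      simp only [Finset.mem_offDiag, Finset.mem_filter, hS]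
      tauto
    have h1 : ∑ φ ∈ Φ, (S φ).offDiag.card
        = ∑ q ∈ E'.offDiag, (Φ.filter (fun φ => φ q.1 < T ∧ φ q.2 < T)).card := by
      simp only [hoff, Finset.card_filter]
      exact Finset.sum_comm
    have hcard : ((E'.offDiag.card : ℕ) : ℝ) = n * n - n := by
      rw [Finset.offDiag_card]
      have hpos : 0 < E'.card :=
        lt_of_lt_of_le (Nat.pow_pos (by norm_num)) hlo
      have : E'.card ≤ E'.card * E'.card := Nat.le_mul_of_pos_left _ hpos
      rw [Nat.cast_sub this, Nat.cast_mul, hn]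
    calc ∑ φ ∈ Φ, ((S φ).offDiag.card : ℝ)
        = ((∑ φ ∈ Φ, (S φ).offDiag.card : ℕ) : ℝ) := by push_cast; rfl
    _ = ((∑ q ∈ E'.offDiag, (Φ.filter (fun φ => φ q.1 < T ∧ φ q.2 < T)).card : ℕ) : ℝ) := by
        rw [h1]
    _ = ∑ q ∈ E'.offDiag, ((Φ.filter (fun φ => φ q.1 < T ∧ φ q.2 < T)).card : ℝ) :=
        Nat.cast_sum _ _
    _ = ∑ q ∈ E'.offDiag, (N * p ^ 2) := Finset.sum_congr rfl (fun q hq => by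
        rw [Finset.mem_offDiag] at hq
        exact key2 q.1 q.2 hq.2.2)
    _ = (n * n - n) * (N * p ^ 2) := by rw [Finset.sum_const, nsmul_eq_mul, hcard]
  -- pointwise inequality
  have hpt : ∀ φ : E → ℕ, ((S φ).card : ℝ) - ((S φ).offDiag.card : ℝ)
      ≤ (if (S φ).card = 1 then (1:ℝ) else 0) := by
    intro φ
    have hod : ((S φ).offDiag.card : ℝ) = ((S φ).card : ℝ) * (S φ).card - (S φ).card := by
      rw [Finset.offDiag_card]
      have : (S φ).card ≤ (S φ).card * (S φ).card := by
        rcases Nat.eq_zero_or_pos (S φ).card with h | h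
        · simp [h]
        · exact Nat.le_mul_of_pos_left _ h
      rcases Nat.eq_zero_or_pos (S φ).card with h | h
      · simp [h]
      · push_cast [Nat.cast_sub this]; ring
    rw [hod]
    obtain h0 | h1 | h2 : (S φ).card = 0 ∨ (S φ).card = 1 ∨ 2 ≤ (S φ).card := by omega
    · rw [h0]; norm_num
    · rw [h1]; norm_num
    · have h2' : (2:ℝ) ≤ ((S φ).card : ℝ) := by exact_mod_cast h2
      have hne : (S φ).card ≠ 1 := by omega
      simp only [hne, if_false]
      nlinarith
  -- assemble
  have hC : ((Φ.filter
        (fun φ => (E'.filter (fun e => φ e < T)).card = 1)).card : ℝ)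
      = ∑ φ ∈ Φ, (if (S φ).card = 1 then (1:ℝ) else 0) := by
    rw [Finset.card_filter]
    push_cast
    rfl
  have hmain : n * (N * p) - (n * n - n) * (N * p ^ 2)
      ≤ ((Φ.filter (fun φ => (E'.filter (fun e => φ e < T)).card = 1)).card : ℝ) := by
    rw [hC, ← sum1, ← sum2, ← Finset.sum_sub_distrib]
    exact Finset.sum_le_sum (fun φ _ => hpt φ)
  refine le_trans ?_ hmain
  -- final arithmetic
  have h2j : ((2:ℝ) ^ (j - 1)) * 4 = 2 ^ (j + 1) := by
    have : (2:ℕ) ^ (j - 1) * 4 = 2 ^ (j + 1) := by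
      have : j - 1 + 2 = j + 1 := by omega
      rw [← this, pow_add]; norm_num
    exact_mod_cast this
  have hx1 : 1 / 4 ≤ n * p := by
    have hlo' : (2:ℝ) ^ (j - 1) ≤ n := by
      rw [hn]; exact_mod_cast hlo
    have hq : (2:ℝ) ^ (j - 1) * p * 4 = 1 :=
      calc (2:ℝ) ^ (j - 1) * p * 4 = p * ((2:ℝ) ^ (j - 1) * 4) := by ring
      _ = p * 2 ^ (j + 1) := by rw [h2j]
      _ = 1 := hpEq
    have := mul_le_mul_of_nonneg_right hlo' hp0
    linarith
  have hx2 : n * p ≤ 1 / 2 := by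
    have hhi' : n ≤ (2:ℝ) ^ j := by
      rw [hn]
      have : (E'.card : ℝ) < ((2:ℕ) ^ j : ℕ) := by exact_mod_cast hhi
      push_cast at this
      linarith
    have hq : (2:ℝ) ^ j * p * 2 = 1 :=
      calc (2:ℝ) ^ j * p * 2 = p * ((2:ℝ) ^ j * 2) := by ring
      _ = p * 2 ^ (j + 1) := by rw [← pow_succ]
      _ = 1 := hpEq
    have := mul_le_mul_of_nonneg_right hhi' hp0
    linarith
  have hn1 : 1 ≤ n := by
    rw [hn]
    have : (1:ℕ) ≤ E'.card := le_trans (Nat.one_le_two_pow) hlo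
    exact_mod_cast this
  nlinarith [mul_nonneg hN0 (mul_nonneg hn0 (mul_nonneg hp0 hp0)),
    mul_nonneg hN0 (mul_nonneg (by linarith : (0:ℝ) ≤ n * p - 1/4)
      (by linarith : (0:ℝ) ≤ 1/2 - n * p)),
    mul_nonneg hN0 (mul_nonneg hn0 hp0)]
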